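/- Fix ε > 0 and let d = dim_E(G, D, ε) ≥ 1. Then for every finite sequence z_1,…,z_τ in Z there exists an index j ∈ {1,…,τ} such that z_j is ε-dependent on at least τ/d − 1 pairwise disjoint subsequences of (z_1,…,z_{j−1}). -/

import Mathlib

/-- `z` is `ε`-dependent on the finite sequence (list) `l` with respect to the class `G` and
divergence `D`. -/
def EpsDependent {Z P : Type*} (G : Set (Z → P)) (D : P → P → ℝ) (ε : ℝ)
    (z : Z) (l : List Z) : Prop :=
  ∀ g ∈ G, ∀ g' ∈ G,
    (l.map fun w => (D (g w) (g' w)) ^ 2).sum ≤ ε ^ 2 → (D (g z) (g' z)) ^ 2 ≤ ε ^ 2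

/-- `z₀` is `ε`-dependent on the subsequence of `(zs i)` indexed by the finite index set `S`. -/
def EpsDependentOn {Z P : Type*} (G : Set (Z → P)) (D : P → P → ℝ) (ε : ℝ)
    (z₀ : Z) (zs : ℕ → Z) (S : Finset ℕ) : Prop :=
  ∀ g ∈ G, ∀ g' ∈ G,
    (∑ i ∈ S, (D (g (zs i)) (g' (zs i))) ^ 2 ≤ ε ^ 2) → (D (g z₀) (g' z₀)) ^ 2 ≤ ε ^ 2

/-- The `ε`-generalized-eluder dimension of `G` with respect to `D`. -/
noncomputable def dimE {Z P : Type*} (G : Set (Z → P)) (D : P → P → ℝ) (ε : ℝ) : ℕ :=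
  sSup {n : ℕ | ∃ (zs : Fin n → Z) (ε' : ℝ), ε ≤ ε' ∧
    ∀ i : Fin n, ¬ EpsDependent G D ε' (zs i) ((List.ofFn zs).take i)}

section Aux

variable {Z P : Type*} (G : Set (Z → P)) (D : P → P → ℝ) (ε : ℝ) (z : ℕ → Z)

/-- The indices in `B` form an `ε`-independent sequence. -/
def IndepList (B : List ℕ) : Prop :=
  ∀ i : Fin B.length, ¬ EpsDependent G D ε (z B[(i : ℕ)]) ((B.take (i : ℕ)).map z)

open Classical in
/-- The bin-filling process: `bins K j` is the state of `K` bins after processing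
indices `1, …, j`. -/
noncomputable def bins (K : ℕ) : ℕ → Fin K → List ℕ
  | 0 => fun _ => []
  | (j+1) =>
    if h : ∃ k, ¬ EpsDependent G D ε (z (j+1)) ((bins K j k).map z) then
      fun k => if k = h.choose then bins K j k ++ [j+1] else bins K j k
    else bins K j

lemma indepList_append {B : List ℕ} (hB : IndepList G D ε z B) {m : ℕ}
    (hm : ¬ EpsDependent G D ε (z m) (B.map z)) : IndepList G D ε z (B ++ [m]) := by
  intro i
  rcases lt_or_ge (i : ℕ) B.length with hi | hi
  · have h1 : (B ++ [m])[(i : ℕ)] = B[(i : ℕ)] := List.getElem_append_left hi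
    have h2 : (B ++ [m]).take i = B.take i := List.take_append_of_le_length hi.le
    rw [h1, h2]
    exact hB ⟨i, hi⟩
  · have hlen : (i : ℕ) = B.length := by
      have := i.2
      simp only [List.length_append, List.length_singleton] at this
      omega
    have h1 : (B ++ [m])[(i : ℕ)] = m := by
      rw [List.getElem_append_right (le_of_eq hlen.symm)]
      simp [hlen]
    have h2 : (B ++ [m]).take i = B := by
      rw [hlen, List.take_append_of_le_length le_rfl, List.take_length]
    rw [h1, h2]
    exact hm

lemma bins_mem (K j : ℕ) (k : Fin K) (m : ℕ) (hm : m ∈ bins G D ε z K j k) :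
    1 ≤ m ∧ m ≤ j := by
  induction j with
  | zero => simp [bins] at hm
  | succ j ih =>
    rw [bins] at hm
    split_ifs at hm with h
    · dsimp only at hm
      by_cases hk : k = h.choose
      · rw [if_pos hk, List.mem_append] at hm
        rcases hm with hm | hm
        · have := ih hm; omega
        · simp at hm; omega
      · rw [if_neg hk] at hm
        have := ih hm; omega
    · have := ih hm; omega

lemma bins_nodup (K j : ℕ) (k : Fin K) : (bins G D ε z K j k).Nodup := by
  induction j with
  | zero => simp [bins]
  | succ j ih =>
    rw [bins]
    split_ifs with h
    · dsimp only
      by_cases hk : k = h.choose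
      · rw [if_pos hk]
        refine List.Nodup.append ih (List.nodup_singleton _) ?_
        intro a ha hb
        simp at hb
        have := bins_mem G D ε z K j k a ha
        omega
      · rw [if_neg hk]; exact ih
    · exact ih

lemma bins_disjoint (K j : ℕ) (k k' : Fin K) (hkk : k ≠ k') (m : ℕ)
    (hm : m ∈ bins G D ε z K j k) : m ∉ bins G D ε z K j k' := by
  induction j with
  | zero => simp [bins]
  | succ j ih =>
    rw [bins] at hm ⊢
    split_ifs at hm ⊢ with h
    · dsimp only at hm ⊢
      have hnew : (j+1) ∉ bins G D ε z K j k' := fun hc => by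
        have := bins_mem G D ε z K j k' (j+1) hc; omega
      have hnew' : (j+1) ∉ bins G D ε z K j k := fun hc => by
        have := bins_mem G D ε z K j k (j+1) hc; omega
      by_cases hk : k = h.choose
      · rw [if_pos hk] at hm
        rw [List.mem_append] at hm
        have hk' : k' ≠ h.choose := fun hc => hkk (hk.trans hc.symm)
        rw [if_neg hk']
        rcases hm with hm | hm
        · exact ih hm
        · simp at hm; subst hm; exact hnew
      · rw [if_neg hk] at hm
        by_cases hk' : k' = h.choose
        · rw [if_pos hk']
          rw [List.mem_append]
          rintro (hc | hc)
          · exact ih hm hc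
          · simp at hc; subst hc; exact hnew' hm
        · rw [if_neg hk']; exact ih hm
    · exact ih hm

lemma bins_indep (K j : ℕ) (k : Fin K) : IndepList G D ε z (bins G D ε z K j k) := by
  induction j with
  | zero => intro i; exact absurd i.2 (by simp [bins])
  | succ j ih =>
    rw [bins]
    split_ifs with h
    · dsimp only
      by_cases hk : k = h.choose
      · rw [if_pos hk]
        exact indepList_append G D ε z ih (hk ▸ h.choose_spec)
      · rw [if_neg hk]; exact ih
    · exact ih

lemma bins_sum (K j : ℕ)
    (h : ∀ j' < j, ∃ k, ¬ EpsDependent G D ε (z (j'+1)) ((bins G D ε z K j' k).map z)) :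
    ∑ k, (bins G D ε z K j k).length = j := by
  induction j with
  | zero => simp [bins]
  | succ j ih =>
    have hj := h j (Nat.lt_succ_self j)
    rw [show (bins G D ε z K (j+1)) = _ from rfl, bins, dif_pos hj]
    have : ∀ k : Fin K,
        (if k = hj.choose then bins G D ε z K j k ++ [j+1] else bins G D ε z K j k).length
        = (bins G D ε z K j k).length + if k = hj.choose then 1 else 0 := by
      intro k; split_ifs <;> simp
    rw [Finset.sum_congr rfl fun k _ => this k, Finset.sum_add_distrib,
      ih (fun j' hj' => h j' (Nat.lt_succ_of_lt hj')), Finset.sum_ite_eq' Finset.univ]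
    simp

end Aux

/-- Any `ε`-independent list of indices has length at most the eluder dimension. -/
lemma indepList_length_le {Z P : Type*} (G : Set (Z → P)) (D : P → P → ℝ)
    (ε : ℝ) (z : ℕ → Z) (d : ℕ) (hd : d = dimE G D ε) (hd1 : 1 ≤ d)
    (B : List ℕ) (hB : IndepList G D ε z B) : B.length ≤ d := by
  set Sdim := {n : ℕ | ∃ (zs : Fin n → Z) (ε' : ℝ), ε ≤ ε' ∧
    ∀ i : Fin n, ¬ EpsDependent G D ε' (zs i) ((List.ofFn zs).take i)} with hS
  have hmem : B.length ∈ Sdim := by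
    refine ⟨fun i => z B[(i : ℕ)], ε, le_rfl, ?_⟩
    intro i
    have hofn : List.ofFn (fun i : Fin B.length => z B[(i : ℕ)]) = B.map z := by
      apply List.ext_getElem <;> simp
    rw [hofn]
    have := hB i
    have htake : (B.map z).take i = (B.take i).map z := List.map_take.symm
    rw [htake]
    exact this
  have hbdd : BddAbove Sdim := by
    by_contra hb
    have : sSup Sdim = 0 := by
      rw [csSup_of_not_bddAbove hb, csSup_empty]
      rfl
    rw [hd, dimE, ← hS, this] at hd1
    omega
  have : B.length ≤ sSup Sdim := le_csSup hbdd hmem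
  rwa [hd, dimE, ← hS]

theorem stmt7 {Z P : Type*} (G : Set (Z → P)) (D : P → P → ℝ)
    (hsymm : ∀ p q, D p q = D q p) (hnonneg : ∀ p q, 0 ≤ D p q)
    (hrefl : ∀ p, D p p = 0) (htri : ∀ p q s, D p s ≤ D p q + D q s)
    (ε : ℝ) (hε : 0 < ε) (d : ℕ) (hd : d = dimE G D ε) (hd1 : 1 ≤ d)
    (τ : ℕ) (hτ : 1 ≤ τ) (z : ℕ → Z) :
    ∃ j ∈ Finset.Icc 1 τ, ∃ (H : ℕ) (S : Fin H → Finset ℕ),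
      (τ : ℝ) / (d : ℝ) - 1 ≤ (H : ℝ) ∧
      (∀ h, S h ⊆ Finset.Icc 1 (j - 1)) ∧
      (Pairwise fun h h' => Disjoint (S h) (S h')) ∧
      (∀ h, EpsDependentOn G D ε (z j) z (S h)) := by
  set K := (τ - 1) / d with hK
  have hdpos : (0:ℝ) < d := by exact_mod_cast hd1
  have hKbound : (τ : ℝ) / d - 1 ≤ K := by
    have h1 : τ - 1 < (K + 1) * d := by
      have := Nat.lt_succ_self K
      rw [hK] at this ⊢
      exact (Nat.div_lt_iff_lt_mul (by omega)).mp (Nat.lt_succ_self _)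
    have h2 : τ ≤ (K + 1) * d := by omega
    have h2' : (τ : ℝ) ≤ (K + 1) * d := by exact_mod_cast h2
    rw [div_sub_one (ne_of_gt hdpos), div_le_iff₀ hdpos]
    push_cast
    linarith
  by_cases hA : ∃ j ∈ Finset.Icc 1 τ,
      ∀ k : Fin K, EpsDependent G D ε (z j) ((bins G D ε z K (j-1) k).map z)
  · obtain ⟨j, hj, hall⟩ := hA
    refine ⟨j, hj, K, fun k => (bins G D ε z K (j-1) k).toFinset, hKbound, ?_, ?_, ?_⟩
    · intro k m hm
      rw [List.mem_toFinset] at hm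
      have := bins_mem G D ε z K (j-1) k m hm
      simp [Finset.mem_Icc]; omega
    · intro k k' hkk
      rw [Finset.disjoint_left]
      intro m hm hm'
      rw [List.mem_toFinset] at hm hm'
      exact bins_disjoint G D ε z K (j-1) k k' hkk m hm hm'
    · intro k g hg g' hg' hsum
      refine hall k g hg g' hg' ?_
      have hnd := bins_nodup G D ε z K (j-1) k
      calc ((( bins G D ε z K (j-1) k).map z).map fun w => D (g w) (g' w) ^ 2).sum
          = ((bins G D ε z K (j-1) k).map fun i => D (g (z i)) (g' (z i)) ^ 2).sum := by
            rw [List.map_map]; rfl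
        _ = ∑ i ∈ (bins G D ε z K (j-1) k).toFinset, D (g (z i)) (g' (z i)) ^ 2 :=
            (List.sum_toFinset _ hnd).symm
        _ ≤ ε ^ 2 := hsum
  · push_neg at hA
    exfalso
    have hstep : ∀ j' < τ, ∃ k, ¬ EpsDependent G D ε (z (j'+1)) ((bins G D ε z K j' k).map z) := by
      intro j' hj'
      obtain ⟨k, hk⟩ := hA (j'+1) (Finset.mem_Icc.mpr ⟨by omega, by omega⟩)
      exact ⟨k, by simpa using hk⟩
    have hsum := bins_sum G D ε z K τ hstep
    have hle : ∀ k : Fin K, (bins G D ε z K τ k).length ≤ d := fun k =>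
      indepList_length_le G D ε z d hd hd1 _ (bins_indep G D ε z K τ k)
    have : τ ≤ K * d := by
      calc τ = ∑ k, (bins G D ε z K τ k).length := hsum.symm
        _ ≤ ∑ _k : Fin K, d := Finset.sum_le_sum fun k _ => hle k
        _ = K * d := by simp [Finset.sum_const, Finset.card_univ, Nat.mul_comm]
    have : K * d ≤ τ - 1 := Nat.div_mul_le_self (τ - 1) d
    omega
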